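/- Let f : R^n -> R^n with f(0)=0, and suppose there is a function Q(x,t) satisfying mu*||x||^2 <= Q(x,t) <= L*||x||^2, Q(f(x,t), t+1) <= rho*Q(x,t) for some rho in (0,1), and x -> grad_x Q(x,t) is L_Q-Lipschitz for each t. Then the system is (sqrt(L/mu), sqrt(rho), L_Q/(2*mu))-exponentially input-to-state stable: for any x_0 and input u_t, the trajectory x_{t+1} = f(x_t,t) + u_t satisfies ||x_t|| <= sqrt(L/mu)*rho^{t/2}*||x_0|| + (L_Q/(2*mu))*sum_{k=0}^{t-1} rho^{(t-1-k)/2}*||u_k||. -/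

import Mathlib

open InnerProductSpace

theorem descent_aux {F : Type*} [NormedAddCommGroup F] [InnerProductSpace ℝ F] [CompleteSpace F]
    (g : F → ℝ) (hg : Differentiable ℝ g) (K : ℝ)
    (hlip : ∀ a b : F, ‖gradient g a - gradient g b‖ ≤ K * ‖a - b‖)
    (z y : F) :
    g y ≤ g z + inner ℝ (gradient g z) (y - z) + K / 2 * ‖y - z‖ ^ 2 := by
  set v := y - z with hv
  set c : ℝ := inner ℝ (gradient g z) v with hc
  have hline : ∀ s : ℝ, HasDerivAt (fun s : ℝ => z + s • v) v s := by
    intro s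
    simpa using ((hasDerivAt_id s).smul_const v).const_add z
  have hφ : ∀ s : ℝ, HasDerivAt (fun s : ℝ => g (z + s • v))
      (inner ℝ (gradient g (z + s • v)) v) s := by
    intro s
    have hgrad : HasFDerivAt g (toDual ℝ F (gradient g (z + s • v))) (z + s • v) :=
      ((hg _).hasGradientAt).hasFDerivAt
    have h := hgrad.comp_hasDerivAt s (hline s)
    rw [InnerProductSpace.toDual_apply_apply] at h
    exact h
  set ψ : ℝ → ℝ := fun s => g (z + s • v) - s * c - K * ‖v‖ ^ 2 / 2 * s ^ 2 with hψ
  have hψ' : ∀ s : ℝ, HasDerivAt ψ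
      ((inner ℝ (gradient g (z + s • v)) v : ℝ) - c - K * ‖v‖ ^ 2 * s) s := by
    intro s
    have h2 : HasDerivAt (fun s : ℝ => s * c) c s := by
      simpa using (hasDerivAt_id s).mul_const c
    have h3 : HasDerivAt (fun s : ℝ => K * ‖v‖ ^ 2 / 2 * s ^ 2)
        (K * ‖v‖ ^ 2 / 2 * (2 * s ^ 1)) s := (hasDerivAt_pow 2 s).const_mul _
    have := ((hφ s).sub h2).sub h3
    exact this.congr_deriv (by ring)
  have hmono : AntitoneOn ψ (Set.Icc (0:ℝ) 1) := by
    apply antitoneOn_of_deriv_nonpos (convex_Icc (0:ℝ) 1)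
    · exact Continuous.continuousOn (by
        have := hg.continuous; fun_prop)
    · intro s hs
      exact (hψ' s).differentiableAt.differentiableWithinAt
    · intro s hs
      rw [interior_Icc] at hs
      rw [(hψ' s).deriv]
      have h1 : (inner ℝ (gradient g (z + s • v)) v : ℝ) - c =
          inner ℝ (gradient g (z + s • v) - gradient g z) v := by
        rw [inner_sub_left]
      have h2 : ‖gradient g (z + s • v) - gradient g z‖ ≤ K * (s * ‖v‖) := by
        have := hlip (z + s • v) z
        simpa [norm_smul, abs_of_pos hs.1, mul_comm] using this
      have h3 : (inner ℝ (gradient g (z + s • v) - gradient g z) v : ℝ) ≤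
          ‖gradient g (z + s • v) - gradient g z‖ * ‖v‖ := real_inner_le_norm _ _
      have hvnn : (0:ℝ) ≤ ‖v‖ := norm_nonneg _
      nlinarith [hs.1.le]
  have := hmono (Set.left_mem_Icc.2 zero_le_one) (Set.right_mem_Icc.2 zero_le_one) zero_le_one
  simp only [hψ] at this
  have e0 : z + (0:ℝ) • v = z := by simp
  have e1 : z + (1:ℝ) • v = y := by simp [hv]
  rw [e0, e1] at this
  linarith [this]

theorem stmt15 (n : ℕ) (μ L LQ ρ : ℝ)
    (hμ : 0 < μ) (hL : 0 < L) (hLQ : 0 < LQ) (hρ0 : 0 < ρ) (hρ1 : ρ < 1)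
    (f : EuclideanSpace ℝ (Fin n) → ℕ → EuclideanSpace ℝ (Fin n))
    (hf0 : ∀ t, f 0 t = 0)
    (Q : EuclideanSpace ℝ (Fin n) → ℕ → ℝ)
    (hQdiff : ∀ t, Differentiable ℝ (fun z => Q z t))
    (hQlow : ∀ x t, μ * ‖x‖ ^ 2 ≤ Q x t)
    (hQupp : ∀ x t, Q x t ≤ L * ‖x‖ ^ 2)
    (hdec : ∀ x t, Q (f x t) (t + 1) ≤ ρ * Q x t)
    (hgradLip : ∀ t, ∀ x y : EuclideanSpace ℝ (Fin n),
      ‖gradient (fun z => Q z t) x - gradient (fun z => Q z t) y‖ ≤ LQ * ‖x - y‖)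
    (x u : ℕ → EuclideanSpace ℝ (Fin n))
    (hx : ∀ t, x (t + 1) = f (x t) t + u t) :
    ∀ t, ‖x t‖ ≤ Real.sqrt (L / μ) * Real.sqrt ρ ^ t * ‖x 0‖ +
      (LQ / (2 * μ)) * ∑ k ∈ Finset.range t, Real.sqrt ρ ^ (t - 1 - k) * ‖u k‖ := by
  have hsum_nn : ∀ t, 0 ≤ ∑ k ∈ Finset.range t, Real.sqrt ρ ^ (t - 1 - k) * ‖u k‖ := by
    intro t
    apply Finset.sum_nonneg
    intro k _
    positivity
  rcases Nat.eq_zero_or_pos n with hn | hn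
  · subst hn
    intro t
    have hx0 : x t = 0 := Subsingleton.elim _ _
    rw [hx0, norm_zero]
    have := hsum_nn t
    positivity
  -- n ≥ 1
  have hQnn : ∀ (y : EuclideanSpace ℝ (Fin n)) t, 0 ≤ Q y t := fun y t =>
    le_trans (by positivity) (hQlow y t)
  have hQ0 : ∀ t, Q 0 t = 0 := by
    intro t
    have h1 := hQlow 0 t
    have h2 := hQupp 0 t
    simp only [norm_zero] at h1 h2
    nlinarith
  have hgrad0 : ∀ t, gradient (fun z => Q z t) 0 = 0 := by
    intro t
    have hmin : IsLocalMin (fun z => Q z t) 0 :=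
      Filter.Eventually.of_forall (fun y => by simpa [hQ0 t] using hQnn y t)
    have hfd := hmin.fderiv_eq_zero
    rw [gradient, hfd, map_zero]
  have hgradbd : ∀ t (z : EuclideanSpace ℝ (Fin n)),
      ‖gradient (fun z' => Q z' t) z‖ ≤ LQ * ‖z‖ := by
    intro t z
    have := hgradLip t z 0
    simpa [hgrad0 t] using this
  have hdesc : ∀ t (z y : EuclideanSpace ℝ (Fin n)),
      Q y t ≤ Q z t + inner ℝ (gradient (fun z' => Q z' t) z) (y - z) + LQ / 2 * ‖y - z‖ ^ 2 :=
    fun t z y => descent_aux _ (hQdiff t) LQ (hgradLip t) z y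
  -- 2μ ≤ LQ
  have hμLQ : 2 * μ ≤ LQ := by
    have h0n : 0 < n := hn
    set e : EuclideanSpace ℝ (Fin n) := EuclideanSpace.single ⟨0, h0n⟩ 1 with he
    have hne : ‖e‖ = 1 := by simp [he, EuclideanSpace.norm_single]
    have h1 := hdesc 0 0 e
    rw [hQ0 0, hgrad0 0] at h1
    simp only [inner_zero_left, sub_zero, hne] at h1
    have h2 := hQlow e 0
    rw [hne] at h2
    nlinarith
  have hsμ : 0 < Real.sqrt μ := Real.sqrt_pos.2 hμ
  set C : ℝ := LQ / (2 * Real.sqrt μ) with hC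
  have hCpos : 0 < C := by positivity
  -- key sqrt-Lipschitz type bound
  have hV : ∀ t (z y : EuclideanSpace ℝ (Fin n)),
      Real.sqrt (Q y t) ≤ Real.sqrt (Q z t) + C * ‖y - z‖ := by
    intro t z y
    have hrhs : 0 ≤ Real.sqrt (Q z t) + C * ‖y - z‖ := by positivity
    rw [show Real.sqrt (Q z t) + C * ‖y - z‖ =
        Real.sqrt ((Real.sqrt (Q z t) + C * ‖y - z‖) ^ 2) from
      (Real.sqrt_sq hrhs).symm]
    apply Real.sqrt_le_sqrt
    have hsq : Real.sqrt (Q z t) ^ 2 = Q z t := Real.sq_sqrt (hQnn z t)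
    have hzbd : ‖z‖ * Real.sqrt μ ≤ Real.sqrt (Q z t) := by
      have : Real.sqrt (μ * ‖z‖ ^ 2) ≤ Real.sqrt (Q z t) := Real.sqrt_le_sqrt (hQlow z t)
      calc ‖z‖ * Real.sqrt μ = Real.sqrt (μ * ‖z‖ ^ 2) := by
            rw [Real.sqrt_mul hμ.le, Real.sqrt_sq (norm_nonneg z)]; ring
        _ ≤ _ := this
    have hinner : (inner ℝ (gradient (fun z' => Q z' t) z) (y - z) : ℝ) ≤
        LQ * ‖z‖ * ‖y - z‖ := by
      calc (inner ℝ (gradient (fun z' => Q z' t) z) (y - z) : ℝ) ≤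
            ‖gradient (fun z' => Q z' t) z‖ * ‖y - z‖ := real_inner_le_norm _ _
        _ ≤ LQ * ‖z‖ * ‖y - z‖ := by
            have := hgradbd t z
            nlinarith [norm_nonneg (y - z)]
    have h1 := hdesc t z y
    have hCsq : LQ / 2 ≤ C ^ 2 := by
      rw [hC]
      rw [div_pow, mul_pow]
      rw [Real.sq_sqrt hμ.le]
      rw [div_le_div_iff₀ (by norm_num) (by positivity)]
      nlinarith
    have hzle : ‖z‖ ≤ Real.sqrt (Q z t) / Real.sqrt μ := by
      rw [le_div_iff₀ hsμ]; exact hzbd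
    have hzs : LQ * ‖z‖ ≤ 2 * C * Real.sqrt (Q z t) := by
      calc LQ * ‖z‖ ≤ LQ * (Real.sqrt (Q z t) / Real.sqrt μ) :=
            mul_le_mul_of_nonneg_left hzle hLQ.le
        _ = 2 * C * Real.sqrt (Q z t) := by rw [hC]; field_simp
    nlinarith [h1, hinner, mul_le_mul_of_nonneg_right hzs (norm_nonneg (y - z)),
      mul_le_mul_of_nonneg_right hCsq (sq_nonneg ‖y - z‖), hsq,
      norm_nonneg (y - z), Real.sqrt_nonneg (Q z t)]
  -- per-step bound
  have hstep : ∀ t, Real.sqrt (Q (x (t + 1)) (t + 1)) ≤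
      Real.sqrt ρ * Real.sqrt (Q (x t) t) + C * ‖u t‖ := by
    intro t
    have h1 := hV (t + 1) (f (x t) t) (x (t + 1))
    have h2 : x (t + 1) - f (x t) t = u t := by rw [hx t]; abel
    rw [h2] at h1
    have h3 : Real.sqrt (Q (f (x t) t) (t + 1)) ≤ Real.sqrt ρ * Real.sqrt (Q (x t) t) := by
      calc Real.sqrt (Q (f (x t) t) (t + 1)) ≤ Real.sqrt (ρ * Q (x t) t) :=
            Real.sqrt_le_sqrt (hdec (x t) t)
        _ = Real.sqrt ρ * Real.sqrt (Q (x t) t) := Real.sqrt_mul hρ0.le _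
    linarith
  have hsρ : (0:ℝ) ≤ Real.sqrt ρ := Real.sqrt_nonneg ρ
  -- main induction
  have hW : ∀ t, Real.sqrt (Q (x t) t) ≤
      Real.sqrt ρ ^ t * Real.sqrt (Q (x 0) 0) +
        C * ∑ k ∈ Finset.range t, Real.sqrt ρ ^ (t - 1 - k) * ‖u k‖ := by
    intro t
    induction t with
    | zero => simp
    | succ t ih =>
      have h1 := hstep t
      have h2 : Real.sqrt ρ * Real.sqrt (Q (x t) t) ≤
          Real.sqrt ρ * (Real.sqrt ρ ^ t * Real.sqrt (Q (x 0) 0) +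
            C * ∑ k ∈ Finset.range t, Real.sqrt ρ ^ (t - 1 - k) * ‖u k‖) :=
        mul_le_mul_of_nonneg_left ih hsρ
      have e : ∑ k ∈ Finset.range (t + 1), Real.sqrt ρ ^ (t + 1 - 1 - k) * ‖u k‖
          = Real.sqrt ρ * ∑ k ∈ Finset.range t, Real.sqrt ρ ^ (t - 1 - k) * ‖u k‖ + ‖u t‖ := by
        rw [Finset.sum_range_succ]
        simp only [Nat.add_sub_cancel]
        rw [Finset.mul_sum]
        congr 1
        · apply Finset.sum_congr rfl
          intro k hk
          have hk' : k < t := Finset.mem_range.1 hk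
          have hkk : t - k = (t - 1 - k) + 1 := by omega
          rw [hkk, pow_succ]
          ring
        · simp
      rw [e]
      calc Real.sqrt (Q (x (t + 1)) (t + 1)) ≤
            Real.sqrt ρ * Real.sqrt (Q (x t) t) + C * ‖u t‖ := h1
        _ ≤ Real.sqrt ρ * (Real.sqrt ρ ^ t * Real.sqrt (Q (x 0) 0) +
              C * ∑ k ∈ Finset.range t, Real.sqrt ρ ^ (t - 1 - k) * ‖u k‖) + C * ‖u t‖ := by
            linarith
        _ = Real.sqrt ρ ^ (t + 1) * Real.sqrt (Q (x 0) 0) +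
              C * (Real.sqrt ρ * (∑ k ∈ Finset.range t, Real.sqrt ρ ^ (t - 1 - k) * ‖u k‖) +
                ‖u t‖) := by ring
  -- conclude
  intro t
  set S : ℝ := ∑ k ∈ Finset.range t, Real.sqrt ρ ^ (t - 1 - k) * ‖u k‖ with hS
  have hSnn : 0 ≤ S := hsum_nn t
  have hxt : Real.sqrt μ * ‖x t‖ ≤ Real.sqrt (Q (x t) t) := by
    have h1 : Real.sqrt (μ * ‖x t‖ ^ 2) ≤ Real.sqrt (Q (x t) t) :=
      Real.sqrt_le_sqrt (hQlow (x t) t)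
    calc Real.sqrt μ * ‖x t‖ = Real.sqrt (μ * ‖x t‖ ^ 2) := by
          rw [Real.sqrt_mul hμ.le, Real.sqrt_sq (norm_nonneg _)]
      _ ≤ _ := h1
  have hW0 : Real.sqrt (Q (x 0) 0) ≤ Real.sqrt L * ‖x 0‖ := by
    have h1 : Real.sqrt (Q (x 0) 0) ≤ Real.sqrt (L * ‖x 0‖ ^ 2) :=
      Real.sqrt_le_sqrt (hQupp (x 0) 0)
    calc Real.sqrt (Q (x 0) 0) ≤ Real.sqrt (L * ‖x 0‖ ^ 2) := h1
      _ = Real.sqrt L * ‖x 0‖ := by rw [Real.sqrt_mul hL.le, Real.sqrt_sq (norm_nonneg _)]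
  have hWt := hW t
  have key : Real.sqrt μ * ‖x t‖ ≤
      Real.sqrt ρ ^ t * (Real.sqrt L * ‖x 0‖) + C * S := by
    have h2 : Real.sqrt ρ ^ t * Real.sqrt (Q (x 0) 0) ≤
        Real.sqrt ρ ^ t * (Real.sqrt L * ‖x 0‖) :=
      mul_le_mul_of_nonneg_left hW0 (pow_nonneg hsρ t)
    linarith
  have hdiv : ‖x t‖ ≤ (Real.sqrt ρ ^ t * (Real.sqrt L * ‖x 0‖) + C * S) / Real.sqrt μ := by
    rw [le_div_iff₀ hsμ]
    linarith [key]
  have heq : (Real.sqrt ρ ^ t * (Real.sqrt L * ‖x 0‖) + C * S) / Real.sqrt μ =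
      Real.sqrt (L / μ) * Real.sqrt ρ ^ t * ‖x 0‖ + (LQ / (2 * μ)) * S := by
    have h2 : C / Real.sqrt μ = LQ / (2 * μ) := by
      rw [hC, div_div, mul_assoc, Real.mul_self_sqrt hμ.le]
    rw [Real.sqrt_div hL.le, ← h2]
    field_simp
  rw [hS] at heq
  calc ‖x t‖ ≤ _ := hdiv
    _ = _ := heq
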